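/- arXiv:1711.10324 — 2 statements merged into one kernel-verified Lean document; each statement's English description precedes it below -/
import Mathlib

section
/- Let a, b ∈ ℂ be nonzero and let δ > 0. If |a| + |b| ≤ (1+δ)|a−b|, then 1 + Re(conj(a)·b)/(|a||b|) ≤ δ·(|a|+|b|)²/(|a||b|). -/
open Complex

/-- If `a, b ≠ 0` and `|a| + |b| ≤ (1+δ)|a-b|`, then
`1 + cos(angle between a and b) ≤ δ (|a|+|b|)²/(|a||b|)`. -/
theorem one_add_cos_le_of_almost_flat
    (a b : ℂ) (ha : a ≠ 0) (hb : b ≠ 0) (δ : ℝ) (hδ : 0 < δ)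
    (h : ‖a‖ + ‖b‖ ≤ (1 + δ) * ‖a - b‖) :
    1 + (starRingEnd ℂ a * b).re / (‖a‖ * ‖b‖)
      ≤ δ * (‖a‖ + ‖b‖) ^ 2 / (‖a‖ * ‖b‖) := by
  have hA : 0 < ‖a‖ := norm_pos_iff.mpr ha
  have hB : 0 <‖b‖ := norm_pos_iff.mpr hb
  have hc : 0 < ‖a‖ * ‖b‖ := mul_pos hA hB
  have hre : (a * starRingEnd ℂ b).re = (starRingEnd ℂ a * b).re := by
    have : starRingEnd ℂ a * b = starRingEnd ℂ (a * starRingEnd ℂ b) := by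
      simp [mul_comm]
    rw [this, Complex.conj_re]
  have h3 : (‖a - b‖) ^ 2
      = (‖a‖) ^ 2 + (‖b‖) ^ 2 - 2 * (starRingEnd ℂ a * b).re := by
    rw [← hre, Complex.sq_norm, Complex.normSq_sub, Complex.sq_norm, Complex.sq_norm]
  have h2 : (‖a‖ + ‖b‖) ^ 2 ≤ (1 + δ) ^ 2 * (‖a - b‖) ^ 2 := by
    nlinarith [norm_nonneg (a - b), hA.le, hB.le]
  have key : ‖a‖ * ‖b‖ + (starRingEnd ℂ a * b).re
      ≤ δ * (‖a‖ + ‖b‖) ^ 2 := by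
    nlinarith [mul_nonneg (mul_nonneg hδ.le hδ.le) (sq_nonneg (‖a‖ + ‖b‖)), mul_nonneg (mul_nonneg (mul_nonneg hδ.le hδ.le) hδ.le) (sq_nonneg (‖a‖ + ‖b‖))]
  have : 1 + (starRingEnd ℂ a * b).re / (‖a‖ * ‖b‖)
      = (‖a‖ * ‖b‖ + (starRingEnd ℂ a * b).re)
        / (‖a‖ * ‖b‖) := by
    field_simp
  rw [this, div_le_div_iff₀ hc hc]
  nlinarith [key, hc.le]
end

section
/- For n ≥ 1 define L_n := 2^{1−2n} · ∏_{j=1}^{n−1} (cos(1/j))^{−1}, and let (τ_j)_{j≥1} be any sequence of reals with 0 ≤ τ_j ≤ 2·tan(1/j) for all j. For k ≥ 1 define R_k := (3·∑_{j=k+1}^∞ L_j − L_k) − ∑_{j=k+1}^∞ 2·L_j·τ_j. Then lim_{k→∞} R_k / L_k = 0. -/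
open Filter

noncomputable section

/-- The scales `L_n = 2^{1-2n} ∏_{j=1}^{n-1} (cos(1/j))⁻¹` of the patches in the recursive
construction of the spiralling curve (the product is `1` when `n ≤ 1`). -/
def patchScale (n : ℕ) : ℝ :=
  (2 : ℝ) ^ ((1 : ℤ) - 2 * (n : ℤ)) * ∏ j ∈ Finset.Icc 1 (n - 1), (Real.cos (1 / (j : ℝ)))⁻¹

lemma half_le_cos {m : ℕ} (hm : 1 ≤ m) : (1 : ℝ) / 2 ≤ Real.cos (1 / (m : ℝ)) := by
  have h1 : (1 : ℝ) ≤ (m : ℝ) := by exact_mod_cast hm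
  have h2 : (1 : ℝ) / (m : ℝ) ≤ 1 := by
    rw [div_le_one (by linarith)]; exact h1
  have h3 : (0 : ℝ) < 1 / (m : ℝ) := by positivity
  have := Real.one_sub_sq_div_two_le_cos (x := 1 / (m : ℝ))
  nlinarith

lemma cos_inv_pos {m : ℕ} (hm : 1 ≤ m) : 0 < Real.cos (1 / (m : ℝ)) :=
  lt_of_lt_of_le (by norm_num) (half_le_cos hm)

lemma patchScale_pos (n : ℕ) : 0 < patchScale n := by
  unfold patchScale
  apply mul_pos (by positivity)
  apply Finset.prod_pos
  intro j hj
  have hj1 : 1 ≤ j := (Finset.mem_Icc.mp hj).1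
  exact inv_pos.mpr (cos_inv_pos hj1)

lemma patchScale_succ (n : ℕ) (hn : 1 ≤ n) :
    patchScale (n + 1) = patchScale n * ((Real.cos (1 / (n : ℝ)))⁻¹ / 4) := by
  unfold patchScale
  have h1 : n + 1 - 1 = (n - 1) + 1 := by omega
  rw [h1, Finset.prod_Icc_succ_top (by omega : 1 ≤ (n - 1) + 1)]
  have h2 : (n - 1) + 1 = n := by omega
  rw [h2]
  have h3 : (1 : ℤ) - 2 * ((n : ℤ) + 1) = ((1 : ℤ) - 2 * n) + (-2) := by ring
  push_cast
  rw [h3, zpow_add₀ (two_ne_zero)]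
  have h4 : (2 : ℝ) ^ (-2 : ℤ) = 1 / 4 := by norm_num
  rw [h4]; ring

/-- ratio `L_{k+1}/L_k`. -/
def cratio (k : ℕ) : ℝ := (Real.cos (1 / (k : ℝ)))⁻¹ / 4

lemma cratio_pos {k : ℕ} (hk : 1 ≤ k) : 0 < cratio k := by
  unfold cratio
  have := cos_inv_pos hk
  positivity

lemma cratio_le_half {k : ℕ} (hk : 1 ≤ k) : cratio k ≤ 1 / 2 := by
  unfold cratio
  have h1 := half_le_cos hk
  have h2 := cos_inv_pos hk
  have : (Real.cos (1 / (k : ℝ)))⁻¹ ≤ 2 := by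
    rw [inv_le_comm₀ h2 (by norm_num)]
    linarith
  linarith

lemma patchScale_upper (k j : ℕ) :
    patchScale (k + 1 + j) ≤ patchScale (k + 1) * (cratio (k + 1)) ^ j := by
  induction j with
  | zero => simp
  | succ j ih =>
    have hn : 1 ≤ k + 1 + j := by omega
    rw [show k + 1 + (j + 1) = (k + 1 + j) + 1 by omega, patchScale_succ _ hn]
    have hcle : Real.cos (1 / ((k + 1 : ℕ) : ℝ)) ≤ Real.cos (1 / ((k + 1 + j : ℕ) : ℝ)) := by
      apply Real.cos_le_cos_of_nonneg_of_le_pi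
      · positivity
      · have : (1 : ℝ) / ((k + 1 : ℕ) : ℝ) ≤ 1 := by
          rw [div_le_one (by positivity)]; exact_mod_cast Nat.one_le_iff_ne_zero.mpr (by omega)
        linarith [Real.pi_gt_three]
      · apply div_le_div_of_nonneg_left (by norm_num) (by positivity)
        exact_mod_cast by omega
    have hinv : (Real.cos (1 / ((k + 1 + j : ℕ) : ℝ)))⁻¹ ≤ (Real.cos (1 / ((k + 1 : ℕ) : ℝ)))⁻¹ :=
      inv_anti₀ (cos_inv_pos (by omega)) hcle
    have hstep : (Real.cos (1 / ((k + 1 + j : ℕ) : ℝ)))⁻¹ / 4 ≤ cratio (k + 1) := by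
      unfold cratio; push_cast at hinv ⊢; linarith
    calc patchScale (k + 1 + j) * ((Real.cos (1 / ((k + 1 + j : ℕ) : ℝ)))⁻¹ / 4)
        ≤ (patchScale (k + 1) * (cratio (k + 1)) ^ j) * (cratio (k + 1)) := by
          apply mul_le_mul ih hstep
          · have := cos_inv_pos (m := k + 1 + j) (by omega)
            positivity
          · have h5 := patchScale_pos (k + 1)
            have h6 := cratio_pos (k := k + 1) (by omega)
            positivity
      _ = patchScale (k + 1) * (cratio (k + 1)) ^ (j + 1) := by ring

lemma patchScale_lower (k j : ℕ) :
    patchScale (k + 1) * (1 / 4 : ℝ) ^ j ≤ patchScale (k + 1 + j) := by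
  induction j with
  | zero => simp
  | succ j ih =>
    have hn : 1 ≤ k + 1 + j := by omega
    rw [show k + 1 + (j + 1) = (k + 1 + j) + 1 by omega, patchScale_succ _ hn]
    have hc := cos_inv_pos (m := k + 1 + j) (by omega)
    have hcle := Real.cos_le_one (1 / ((k + 1 + j : ℕ) : ℝ))
    have h1 : (1 : ℝ) ≤ (Real.cos (1 / ((k + 1 + j : ℕ) : ℝ)))⁻¹ := (one_le_inv₀ hc).mpr hcle
    have hL := patchScale_pos (k + 1 + j)
    calc patchScale (k + 1) * (1 / 4 : ℝ) ^ (j + 1)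
        = (patchScale (k + 1) * (1 / 4 : ℝ) ^ j) * (1 / 4) := by ring
      _ ≤ patchScale (k + 1 + j) * ((Real.cos (1 / ((k + 1 + j : ℕ) : ℝ)))⁻¹ / 4) := by
          apply mul_le_mul ih (by linarith) (by norm_num)
          exact hL.le

lemma cratio_lt_one {k : ℕ} (hk : 1 ≤ k) : cratio k < 1 :=
  lt_of_le_of_lt (cratio_le_half hk) (by norm_num)

lemma summable_patch (k : ℕ) : Summable (fun j : ℕ => patchScale (k + 1 + j)) := by
  apply Summable.of_nonneg_of_le (fun j => (patchScale_pos _).le) (patchScale_upper k)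
  exact (summable_geometric_of_lt_one (cratio_pos (by omega)).le
    (cratio_lt_one (by omega))).mul_left _

lemma one_div_mem_Ioo {m : ℕ} (hm : 1 ≤ m) :
    1 / (m : ℝ) ∈ Set.Ioo (-(Real.pi / 2)) (Real.pi / 2) := by
  have h1 : (1 : ℝ) ≤ (m : ℝ) := by exact_mod_cast hm
  have h2 : (1 : ℝ) / (m : ℝ) ≤ 1 := by rw [div_le_one (by linarith)]; exact h1
  have h3 : (0 : ℝ) < 1 / (m : ℝ) := by positivity
  constructor
  · nlinarith [Real.pi_gt_three]
  · nlinarith [Real.pi_gt_three]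

lemma tan_anti {a b : ℕ} (ha : 1 ≤ a) (hab : a ≤ b) :
    Real.tan (1 / (b : ℝ)) ≤ Real.tan (1 / (a : ℝ)) := by
  have hb : 1 ≤ b := le_trans ha hab
  apply Real.strictMonoOn_tan.monotoneOn (one_div_mem_Ioo hb) (one_div_mem_Ioo ha)
  apply div_le_div_of_nonneg_left (by norm_num)
  · have : (0 : ℝ) < (a : ℝ) := by exact_mod_cast ha
    exact this
  · exact_mod_cast hab

lemma tan_nn {m : ℕ} (hm : 1 ≤ m) : 0 ≤ Real.tan (1 / (m : ℝ)) := by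
  apply Real.tan_nonneg_of_nonneg_of_le_pi_div_two (by positivity)
  exact (one_div_mem_Ioo hm).2.le

lemma cratio_tendsto : Tendsto (fun k : ℕ => cratio k) atTop (nhds (1 / 4)) := by
  have h0 : Tendsto (fun k : ℕ => 1 / (k : ℝ)) atTop (nhds 0) :=
    tendsto_one_div_atTop_nhds_zero_nat
  have h1 : Tendsto (fun k : ℕ => Real.cos (1 / (k : ℝ))) atTop (nhds 1) := by
    have := (Real.continuous_cos.tendsto 0).comp h0
    simpa [Function.comp_def] using this
  have h2 := (h1.inv₀ one_ne_zero).div_const 4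
  unfold cratio
  convert h2 using 2
  norm_num

lemma tan_tendsto : Tendsto (fun k : ℕ => Real.tan (1 / ((k + 1 : ℕ) : ℝ))) atTop (nhds 0) := by
  have h0 : Tendsto (fun k : ℕ => 1 / ((k + 1 : ℕ) : ℝ)) atTop (nhds 0) := by
    have : Tendsto (fun n : ℕ => 1 / ((n : ℝ) + 1)) atTop (nhds 0) :=
      tendsto_one_div_add_atTop_nhds_zero_nat
    push_cast
    exact this
  have hcont : ContinuousAt Real.tan 0 :=
    Real.continuousAt_tan.mpr (by simp)
  have := (hcont.tendsto).comp h0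
  simpa [Function.comp_def] using this

/-- If `0 ≤ τ_j ≤ 2 tan(1/j)` and
`R_k = (3 ∑_{j>k} L_j - L_k) - ∑_{j>k} 2 L_j τ_j`, then `R_k / L_k → 0`. -/
theorem length_error_vanishes
    (τ : ℕ → ℝ) (hτ : ∀ j : ℕ, 1 ≤ j → 0 ≤ τ j ∧ τ j ≤ 2 * Real.tan (1 / (j : ℝ))) :
    Tendsto (fun k : ℕ =>
        ((3 * ∑' j : ℕ, patchScale (k + 1 + j) - patchScale k) -
          ∑' j : ℕ, 2 * patchScale (k + 1 + j) * τ (k + 1 + j)) / patchScale k)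
      atTop (nhds 0) := by
  set lo : ℕ → ℝ := fun k =>
    4 * cratio k - 1 -
      4 * Real.tan (1 / ((k + 1 : ℕ) : ℝ)) * cratio k * (1 - cratio (k + 1))⁻¹ with hlo_def
  set hi : ℕ → ℝ := fun k => 3 * cratio k * (1 - cratio (k + 1))⁻¹ - 1 with hhi_def
  have hc1 : Tendsto (fun k : ℕ => cratio (k + 1)) atTop (nhds (1 / 4)) :=
    cratio_tendsto.comp (tendsto_add_atTop_nat 1)
  have hlo : Tendsto lo atTop (nhds 0) := by
    have h := ((cratio_tendsto.const_mul 4).sub (tendsto_const_nhds (x := (1 : ℝ)))).sub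
      (((tan_tendsto.const_mul 4).mul cratio_tendsto).mul
        (((tendsto_const_nhds (x := (1 : ℝ))).sub hc1).inv₀ (by norm_num)))
    have e : (4 * (1 / 4 : ℝ) - 1 - 4 * 0 * (1 / 4) * ((1 : ℝ) - 1 / 4)⁻¹) = 0 := by norm_num
    rw [e] at h
    exact h
  have hhi : Tendsto hi atTop (nhds 0) := by
    have h := ((cratio_tendsto.const_mul 3).mul
      (((tendsto_const_nhds (x := (1 : ℝ))).sub hc1).inv₀ (by norm_num))).sub
      (tendsto_const_nhds (x := (1 : ℝ)))
    have e : (3 * (1 / 4 : ℝ) * ((1 : ℝ) - 1 / 4)⁻¹ - 1) = 0 := by norm_num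
    rw [e] at h
    exact h
  have key : ∀ k : ℕ, 1 ≤ k →
      lo k ≤ ((3 * ∑' j : ℕ, patchScale (k + 1 + j) - patchScale k) -
          ∑' j : ℕ, 2 * patchScale (k + 1 + j) * τ (k + 1 + j)) / patchScale k ∧
      ((3 * ∑' j : ℕ, patchScale (k + 1 + j) - patchScale k) -
          ∑' j : ℕ, 2 * patchScale (k + 1 + j) * τ (k + 1 + j)) / patchScale k ≤ hi k := by
    intro k hk
    have hLk := patchScale_pos k
    have hL1 : patchScale (k + 1) = patchScale k * cratio k := by
      rw [patchScale_succ k hk]; rfl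
    have hL1pos := patchScale_pos (k + 1)
    have hr0 : (0 : ℝ) ≤ cratio (k + 1) := (cratio_pos (by omega)).le
    have hr1 : cratio (k + 1) < 1 := cratio_lt_one (by omega)
    have hgeom : Summable (fun j : ℕ => patchScale (k + 1) * (cratio (k + 1)) ^ j) :=
      (summable_geometric_of_lt_one hr0 hr1).mul_left _
    have hSu : (∑' j : ℕ, patchScale (k + 1 + j)) ≤
        patchScale (k + 1) * (1 - cratio (k + 1))⁻¹ := by
      have h := Summable.tsum_le_tsum (patchScale_upper k) (summable_patch k) hgeom
      rwa [tsum_mul_left, tsum_geometric_of_lt_one hr0 hr1] at h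
    have hSl : patchScale (k + 1) * (4 / 3 : ℝ) ≤ ∑' j : ℕ, patchScale (k + 1 + j) := by
      have hg : Summable (fun j : ℕ => patchScale (k + 1) * (1 / 4 : ℝ) ^ j) :=
        (summable_geometric_of_lt_one (by norm_num) (by norm_num)).mul_left _
      have h := Summable.tsum_le_tsum (patchScale_lower k) hg (summable_patch k)
      rw [tsum_mul_left, tsum_geometric_of_lt_one (by norm_num) (by norm_num)] at h
      norm_num at h
      linarith
    set t := Real.tan (1 / ((k + 1 : ℕ) : ℝ)) with ht_def
    have htn : 0 ≤ t := tan_nn (by omega)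
    have hτb : ∀ j : ℕ, 2 * patchScale (k + 1 + j) * τ (k + 1 + j) ≤
        (4 * t) * patchScale (k + 1 + j) := by
      intro j
      have hL := patchScale_pos (k + 1 + j)
      have h1 := (hτ (k + 1 + j) (by omega)).2
      have h2 : Real.tan (1 / ((k + 1 + j : ℕ) : ℝ)) ≤ t := tan_anti (by omega) (by omega)
      nlinarith
    have hτ0 : ∀ j : ℕ, 0 ≤ 2 * patchScale (k + 1 + j) * τ (k + 1 + j) := by
      intro j
      have hL := patchScale_pos (k + 1 + j)
      have h1 := (hτ (k + 1 + j) (by omega)).1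
      positivity
    have hTsum : Summable (fun j : ℕ => 2 * patchScale (k + 1 + j) * τ (k + 1 + j)) :=
      Summable.of_nonneg_of_le hτ0 hτb ((summable_patch k).mul_left _)
    have hT0 : 0 ≤ ∑' j : ℕ, 2 * patchScale (k + 1 + j) * τ (k + 1 + j) :=
      tsum_nonneg hτ0
    have hTu : (∑' j : ℕ, 2 * patchScale (k + 1 + j) * τ (k + 1 + j)) ≤
        (4 * t) * ∑' j : ℕ, patchScale (k + 1 + j) := by
      have h := Summable.tsum_le_tsum hτb hTsum ((summable_patch k).mul_left _)
      rwa [tsum_mul_left] at h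
    set S := ∑' j : ℕ, patchScale (k + 1 + j)
    set T := ∑' j : ℕ, 2 * patchScale (k + 1 + j) * τ (k + 1 + j)
    have hTu2 : T ≤ (4 * t) * (patchScale (k + 1) * (1 - cratio (k + 1))⁻¹) :=
      le_trans hTu (mul_le_mul_of_nonneg_left hSu (by positivity))
    constructor
    · rw [le_div_iff₀ hLk]
      have e1 : lo k * patchScale k =
          4 * patchScale (k + 1) - patchScale k -
            4 * t * patchScale (k + 1) * (1 - cratio (k + 1))⁻¹ := by
        rw [hlo_def, hL1]; ring
      rw [e1]
      linarith
    · rw [div_le_iff₀ hLk]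
      have e2 : hi k * patchScale k =
          3 * patchScale (k + 1) * (1 - cratio (k + 1))⁻¹ - patchScale k := by
        rw [hhi_def, hL1]; ring
      rw [e2]
      have h3 : 3 * S ≤ 3 * (patchScale (k + 1) * (1 - cratio (k + 1))⁻¹) := by linarith
      linarith
  apply tendsto_of_tendsto_of_tendsto_of_le_of_le' hlo hhi
  · filter_upwards [eventually_ge_atTop 1] with k hk
    exact (key k hk).1
  · filter_upwards [eventually_ge_atTop 1] with k hk
    exact (key k hk).2
end
end
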